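/- Let L⁻, L⁺ : Ω → 𝕍⁺ be Borel measurable with L⁻(ω)(t) ≤ L⁺(ω)(t) for all t ∈ [0,T) for ℙ-almost every ω. Then the family of laws { ℙ ∘ (L⁻ ∨ L ∧ L⁺)⁻¹ : L : Ω → 𝕍⁺ Borel measurable } is tight in the space of Borel probability measures on (𝕍⁺, d_L): for every ε > 0 there exists a compact set K ⊆ 𝕍⁺ such that μ(K) ≥ 1 − ε for every measure μ in this family. Here (L⁻ ∨ L ∧ L⁺)(ω)(t) := L⁻(ω)(t) ∨ L(ω)(t) ∧ L⁺(ω)(t), which again defines an element of 𝕍⁺. -/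

import Mathlib

open MeasureTheory Filter Set Topology

noncomputable section

/-- Membership in the space `𝕍⁺` of nondecreasing, left-continuous functions
`v : [0,T) → ℝ ∪ {−∞}` with `v 0 = −∞` and `v` real-valued on `(0,T)`
(encoded as functions `ℝ → WithBot ℝ`, normalized to `⊥` outside `(0,T)`;
left-continuity of a nondecreasing function is expressed in order-theoretic
terms: `v t` is the least upper bound of the values of `v` on `[0,t)`). -/
def InVPlus (T : ℝ) (v : ℝ → WithBot ℝ) : Prop :=
  (∀ t : ℝ, t ∉ Set.Ioo 0 T → v t = ⊥) ∧
  (∀ s t : ℝ, 0 ≤ s → s ≤ t → t < T → v s ≤ v t) ∧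
  (∀ t : ℝ, t ∈ Set.Ioo 0 T → v t ≠ ⊥) ∧
  (∀ t : ℝ, t ∈ Set.Ioo 0 T → IsLUB (v '' Set.Ico 0 t) (v t))

/-- The Lévy metric `d_L` on `𝕍⁺`:
`d_L(v₁,v₂) = inf {ε ≥ 0 : v₁((t−ε)∨0) − ε ≤ v₂(t), v₂((t−ε)∨0) − ε ≤ v₁(t), ∀ t ∈ (0,T)}`. -/
noncomputable def dL (T : ℝ) (v₁ v₂ : ℝ → WithBot ℝ) : ℝ :=
  sInf {ε : ℝ | 0 ≤ ε ∧ ∀ t : ℝ, t ∈ Set.Ioo 0 T →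
    (v₁ (max (t - ε) 0)).map (fun x => x - ε) ≤ v₂ t ∧
    (v₂ (max (t - ε) 0)).map (fun x => x - ε) ≤ v₁ t}

/-- The Polish space `(𝕍⁺, d_L)`, as a type. -/
structure VPlus (T : ℝ) where
  toFun : ℝ → WithBot ℝ
  mem : InVPlus T toFun

/-- The metric topology of `d_L` on `𝕍⁺` (generated by the open balls). -/
instance (T : ℝ) : TopologicalSpace (VPlus T) :=
  TopologicalSpace.generateFrom
    {U : Set (VPlus T) | ∃ v : VPlus T, ∃ ε : ℝ, 0 < ε ∧
      U = {w : VPlus T | dL T v.toFun w.toFun < ε}}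

/-- The Borel σ-algebra of `(𝕍⁺, d_L)`. -/
instance (T : ℝ) : MeasurableSpace (VPlus T) := borel (VPlus T)

section Aux

variable {T : ℝ}

/-- The admissibility predicate underlying `dL`. -/
def Adm (T : ℝ) (v w : ℝ → WithBot ℝ) (ε : ℝ) : Prop :=
  0 ≤ ε ∧ ∀ t : ℝ, t ∈ Set.Ioo 0 T →
    (v (max (t - ε) 0)).map (fun x => x - ε) ≤ w t ∧
    (w (max (t - ε) 0)).map (fun x => x - ε) ≤ v t

lemma dL_eq (v w : ℝ → WithBot ℝ) : dL T v w = sInf {ε | Adm T v w ε} := rfl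

lemma map_sub_mono {a b : WithBot ℝ} (c : ℝ) (h : a ≤ b) :
    a.map (fun x => x - c) ≤ b.map (fun x => x - c) := by
  cases a with
  | bot => simp
  | coe x =>
    cases b with
    | bot => exact absurd h (by simp)
    | coe y =>
      rw [WithBot.map_coe, WithBot.map_coe, WithBot.coe_le_coe]
      have : x ≤ y := WithBot.coe_le_coe.1 h
      linarith

lemma map_sub_sub (a : WithBot ℝ) (c d : ℝ) :
    (a.map (fun x => x - c)).map (fun x => x - d) = a.map (fun x => x - (c + d)) := by
  cases a with
  | bot => simp
  | coe x => rw [WithBot.map_coe, WithBot.map_coe, WithBot.map_coe]; norm_num; ring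

lemma map_sub_zero (a : WithBot ℝ) : a.map (fun x => x - (0:ℝ)) = a := by
  cases a with
  | bot => simp
  | coe x => rw [WithBot.map_coe]; norm_num

lemma adm_zero (v : ℝ → WithBot ℝ) : Adm T v v 0 :=
  ⟨le_refl 0, fun t ht => by
    constructor <;>
    · rw [sub_zero, max_eq_left ht.1.le, map_sub_zero]⟩

lemma adm_top (hT : 0 < T) {v w : ℝ → WithBot ℝ} (hv : InVPlus T v) (hw : InVPlus T w) :
    Adm T v w T := by
  refine ⟨hT.le, fun t ht => ?_⟩
  have hmax : max (t - T) 0 = 0 := max_eq_right (by linarith [ht.2])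
  rw [hmax, hv.1 0 (by simp), hw.1 0 (by simp)]
  simp

lemma adm_bddBelow (v w : ℝ → WithBot ℝ) : BddBelow {ε | Adm T v w ε} :=
  ⟨0, fun ε hε => hε.1⟩

lemma adm_nonempty (hT : 0 < T) {v w : ℝ → WithBot ℝ} (hv : InVPlus T v) (hw : InVPlus T w) :
    {ε | Adm T v w ε}.Nonempty := ⟨T, adm_top hT hv hw⟩

lemma dL_le_of_adm {v w : ℝ → WithBot ℝ} {ε : ℝ} (h : Adm T v w ε) : dL T v w ≤ ε :=
  csInf_le (adm_bddBelow v w) h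

lemma exists_adm_lt (hT : 0 < T) {v w : ℝ → WithBot ℝ} (hv : InVPlus T v) (hw : InVPlus T w)
    {ε : ℝ} (h : dL T v w < ε) : ∃ ε' , Adm T v w ε' ∧ ε' < ε := by
  obtain ⟨ε', h1, h2⟩ := exists_lt_of_csInf_lt (adm_nonempty hT hv hw) h
  exact ⟨ε', h1, h2⟩

lemma dL_self_lt (v : ℝ → WithBot ℝ) {ε : ℝ} (hε : 0 < ε) : dL T v v < ε :=
  lt_of_le_of_lt (dL_le_of_adm (adm_zero v)) hε

lemma Adm.comp {u v w : ℝ → WithBot ℝ} {ε₁ ε₂ : ℝ}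
    (hu : InVPlus T u) (hw : InVPlus T w)
    (h₁ : Adm T u v ε₁) (h₂ : Adm T v w ε₂) : Adm T u w (ε₁ + ε₂) := by
  refine ⟨by linarith [h₁.1, h₂.1], fun t ht => ?_⟩
  constructor
  · by_cases h : 0 < t - ε₂
    · have ht' : t - ε₂ ∈ Set.Ioo 0 T := ⟨h, by linarith [ht.2, h₂.1]⟩
      have A := (h₁.2 _ ht').1
      have B := (h₂.2 t ht).1
      rw [max_eq_left h.le] at B
      calc (u (max (t - (ε₁ + ε₂)) 0)).map (fun x => x - (ε₁ + ε₂))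
          = ((u (max (t - ε₂ - ε₁) 0)).map (fun x => x - ε₁)).map (fun x => x - ε₂) := by
            rw [map_sub_sub, show t - ε₂ - ε₁ = t - (ε₁ + ε₂) by ring]
        _ ≤ (v (t - ε₂)).map (fun x => x - ε₂) := map_sub_mono _ A
        _ ≤ w t := B
    · push_neg at h
      have hmax : max (t - (ε₁ + ε₂)) 0 = 0 := max_eq_right (by linarith [h₁.1])
      rw [hmax, hu.1 0 (by simp)]; simp
  · by_cases h : 0 < t - ε₁
    · have ht' : t - ε₁ ∈ Set.Ioo 0 T := ⟨h, by linarith [ht.2, h₁.1]⟩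
      have A := (h₂.2 _ ht').2
      have B := (h₁.2 t ht).2
      rw [max_eq_left h.le] at B
      calc (w (max (t - (ε₁ + ε₂)) 0)).map (fun x => x - (ε₁ + ε₂))
          = ((w (max (t - ε₁ - ε₂) 0)).map (fun x => x - ε₂)).map (fun x => x - ε₁) := by
            rw [map_sub_sub, show ε₂ + ε₁ = ε₁ + ε₂ by ring,
              show t - ε₁ - ε₂ = t - (ε₁ + ε₂) by ring]
        _ ≤ (v (t - ε₁)).map (fun x => x - ε₁) := map_sub_mono _ A
        _ ≤ u t := B
    · push_neg at h
      have hmax : max (t - (ε₁ + ε₂)) 0 = 0 := max_eq_right (by linarith [h₂.1])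
      rw [hmax, hw.1 0 (by simp)]; simp

/-- Open balls for `dL`. -/
def dball (v : VPlus T) (ε : ℝ) : Set (VPlus T) := {w : VPlus T | dL T v.toFun w.toFun < ε}

lemma isOpen_dball (v : VPlus T) {ε : ℝ} (hε : 0 < ε) : IsOpen (dball v ε) :=
  TopologicalSpace.isOpen_generateFrom_of_mem ⟨v, ε, hε, rfl⟩

lemma mem_dball_self (v : VPlus T) {ε : ℝ} (hε : 0 < ε) : v ∈ dball v ε :=
  dL_self_lt v.toFun hε

end Aux
section Aux2

variable {T : ℝ}

instance (T : ℝ) : BorelSpace (VPlus T) := ⟨rfl⟩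

lemma isOpen_eval_gt (hT : 0 < T) {t : ℝ} (ht : t ∈ Set.Ioo 0 T) (c : ℝ) :
    IsOpen {v : VPlus T | (c : WithBot ℝ) < v.toFun t} := by
  rw [isOpen_iff_forall_mem_open]
  intro v hv
  -- v t is a real > c
  obtain ⟨r, hr⟩ := WithBot.ne_bot_iff_exists.1 (v.mem.2.2.1 t ht)
  have hrc : c < r := by
    have := hv; simp only [Set.mem_setOf_eq] at this
    rw [← hr] at this; exact_mod_cast this
  set θ := (r - c) / 2 with hθdef
  have hθ : 0 < θ := by simp [hθdef]; linarith
  -- find s < t with v s > c + θ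
  have hlub := v.mem.2.2.2 t ht
  have hex : ∃ s ∈ Set.Ico 0 t, ((c + θ : ℝ) : WithBot ℝ) < v.toFun s := by
    by_contra hcon
    push_neg at hcon
    have hub : ((c + θ : ℝ) : WithBot ℝ) ∈ upperBounds (v.toFun '' Set.Ico 0 t) := by
      rintro y ⟨s, hs, rfl⟩; exact hcon s hs
    have := hlub.2 hub
    rw [← hr] at this
    have : r ≤ c + θ := by exact_mod_cast this
    simp [hθdef] at this; linarith
  obtain ⟨s, hs, hvs⟩ := hex
  have hs0 : 0 < s := by
    rcases lt_or_eq_of_le hs.1 with h | h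
    · exact h
    · exfalso; rw [v.mem.1 s (by simp [← h])] at hvs; exact absurd hvs (by simp)
  set ε := min θ (t - s) with hεdef
  have hε : 0 < ε := lt_min hθ (by linarith [hs.2])
  refine ⟨dball v ε, ?_, isOpen_dball v hε, mem_dball_self v hε⟩
  intro w hw
  obtain ⟨ε', hadm, hε'⟩ := exists_adm_lt hT v.mem w.mem hw
  have hε'0 : 0 ≤ ε' := hadm.1
  have h1 : s ≤ t - ε' := by
    have : ε' ≤ t - s := lt_of_lt_of_le hε' (min_le_right _ _) |>.le
    linarith
  have hmax : max (t - ε') 0 = t - ε' := max_eq_left (by linarith)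
  have hA := (hadm.2 t ht).1
  rw [hmax] at hA
  -- v (t - ε') ≥ v s > c + θ
  have hmono : v.toFun s ≤ v.toFun (t - ε') := v.mem.2.1 s (t - ε') hs0.le h1 (by linarith [ht.2])
  obtain ⟨x, hx⟩ := WithBot.ne_bot_iff_exists.1
    (v.mem.2.2.1 (t - ε') ⟨by linarith, by linarith [ht.2]⟩)
  rw [← hx] at hA hmono
  obtain ⟨y, hy⟩ := WithBot.ne_bot_iff_exists.1
    (v.mem.2.2.1 s ⟨hs0, by linarith [ht.2, hs.2]⟩)
  rw [← hy] at hmono hvs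
  have hyx : y ≤ x := by exact_mod_cast hmono
  have hcy : c + θ < y := by exact_mod_cast hvs
  rw [WithBot.map_coe] at hA
  have : ((c:ℝ) : WithBot ℝ) < ((x - ε' : ℝ) : WithBot ℝ) := by
    have hε'θ : ε' < θ := lt_of_lt_of_le hε' (min_le_left _ _)
    exact_mod_cast (by linarith : c < x - ε')
  show ((c:ℝ) : WithBot ℝ) < w.toFun t
  exact lt_of_lt_of_le this hA

lemma measurableSet_eval_ge (hT : 0 < T) {t : ℝ} (ht : t ∈ Set.Ioo 0 T) (d : ℝ) :
    MeasurableSet {v : VPlus T | (d : WithBot ℝ) ≤ v.toFun t} := by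
  have heq : {v : VPlus T | (d : WithBot ℝ) ≤ v.toFun t}
      = ⋂ k : ℕ, {v : VPlus T | ((d - 1 / (k + 1) : ℝ) : WithBot ℝ) < v.toFun t} := by
    ext v
    simp only [Set.mem_setOf_eq, Set.mem_iInter]
    constructor
    · intro h k
      refine lt_of_lt_of_le ?_ h
      have hpos : (0:ℝ) < 1 / ((k:ℝ) + 1) := by positivity
      exact_mod_cast (by linarith : d - 1/((k:ℝ)+1) < d)
    · intro h
      obtain ⟨r, hr⟩ := WithBot.ne_bot_iff_exists.1 (v.mem.2.2.1 t ht)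
      rw [← hr]
      have : ∀ k : ℕ, d - 1 / ((k:ℝ) + 1) < r := by
        intro k; have := h k; rw [← hr] at this; exact_mod_cast this
      have hdr : d ≤ r := by
        by_contra hcon
        push_neg at hcon
        obtain ⟨k, hk⟩ := exists_nat_one_div_lt (by linarith : 0 < d - r)
        have := this k; linarith
      exact_mod_cast hdr
  rw [heq]
  exact MeasurableSet.iInter fun k => (isOpen_eval_gt hT ht _).measurableSet

lemma measurableSet_eval_lt (hT : 0 < T) {t : ℝ} (ht : t ∈ Set.Ioo 0 T) (d : ℝ) :
    MeasurableSet {v : VPlus T | v.toFun t < (d : WithBot ℝ)} := by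
  have : {v : VPlus T | v.toFun t < (d : WithBot ℝ)}
      = {v : VPlus T | (d : WithBot ℝ) ≤ v.toFun t}ᶜ := by
    ext v; simp [not_le]
  rw [this]
  exact (measurableSet_eval_ge hT ht d).compl

end Aux2
section Aux3

variable {T : ℝ}

/-- Rationals in `(0,T)`. -/
def QT (T : ℝ) : Type := {q : ℚ // 0 < ((q : ℝ)) ∧ ((q : ℝ)) < T}

lemma nonempty_QT (hT : 0 < T) : Nonempty (QT T) := by
  obtain ⟨q, hq1, hq2⟩ := exists_rat_btwn hT
  exact ⟨⟨q, hq1, hq2⟩⟩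

/-- Monotone families indexed by rationals. -/
def MonoQ (T : ℝ) (f : QT T → ℝ) : Prop := ∀ p q : QT T, p.1 ≤ q.1 → f p ≤ f q

/-- The compact "box" of monotone families between bounds `A` and `B`. -/
def Cset (T : ℝ) (A B : QT T → ℝ) : Set (QT T → ℝ) :=
  {f | MonoQ T f ∧ ∀ q, f q ∈ Set.Icc (A q) (B q)}

/-- The left-continuous envelope of a rational family. -/
noncomputable def PhiFun (T : ℝ) (f : QT T → ℝ) : ℝ → WithBot ℝ := fun t =>
  if h : 0 < t ∧ t < T then ((sSup (f '' {q : QT T | ((q.1 : ℝ)) < t}) : ℝ) : WithBot ℝ)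
  else ⊥

lemma setQ_nonempty (hT : 0 < T) {t : ℝ} (ht : 0 < t) :
    {q : QT T | ((q.1 : ℝ)) < t}.Nonempty := by
  obtain ⟨q, hq1, hq2⟩ := exists_rat_btwn (lt_min ht hT)
  exact ⟨⟨q, hq1, lt_of_lt_of_le hq2 (min_le_right _ _)⟩,
    lt_of_lt_of_le hq2 (min_le_left _ _)⟩

lemma bddAbove_img (hT : 0 < T) {f : QT T → ℝ} (hf : MonoQ T f) {t : ℝ} (ht : t < T) :
    BddAbove (f '' {q : QT T | ((q.1 : ℝ)) < t}) := by
  obtain ⟨qs, hq1, hq2⟩ := exists_rat_btwn (max_lt ht hT)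
  have hq0 : (0:ℝ) < (qs : ℝ) := lt_of_le_of_lt (le_max_right t 0) hq1
  refine ⟨f ⟨qs, hq0, hq2⟩, ?_⟩
  rintro y ⟨q, hq, rfl⟩
  have : ((q.1 : ℝ)) < ((qs : ℝ)) := lt_trans (lt_of_lt_of_le hq (le_max_left t 0)) hq1
  exact hf q _ (by exact_mod_cast this.le)

lemma phiFun_mono (hT : 0 < T) {f : QT T → ℝ} (hf : MonoQ T f) :
    ∀ s t : ℝ, 0 ≤ s → s ≤ t → t < T → PhiFun T f s ≤ PhiFun T f t := by
  intro s t hs0 hst htT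
  by_cases hs : 0 < s
  · have ht0 : 0 < t := lt_of_lt_of_le hs hst
    simp only [PhiFun]
    rw [dif_pos ⟨hs, lt_of_le_of_lt hst htT⟩, dif_pos ⟨ht0, htT⟩]
    exact WithBot.coe_le_coe.2 (csSup_le_csSup (bddAbove_img hT hf htT)
      ((setQ_nonempty hT hs).image f)
      (Set.image_mono (fun q hq => lt_of_lt_of_le hq hst)))
  · simp only [PhiFun]
    rw [dif_neg (fun h => hs h.1)]
    exact bot_le

lemma inVPlus_phiFun (hT : 0 < T) {f : QT T → ℝ} (hf : MonoQ T f) :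
    InVPlus T (PhiFun T f) := by
  refine ⟨?_, phiFun_mono hT hf, ?_, ?_⟩
  · intro t ht
    simp only [PhiFun]
    rw [dif_neg (by simpa [Set.mem_Ioo] using ht)]
  · intro t ht
    simp only [PhiFun]
    rw [dif_pos ⟨ht.1, ht.2⟩]
    exact WithBot.coe_ne_bot
  · intro t ht
    constructor
    · rintro y ⟨s, hs, rfl⟩
      exact phiFun_mono hT hf s t hs.1 hs.2.le ht.2
    · intro u hu
      obtain ⟨q₀, hq₀⟩ := setQ_nonempty hT (T := T) ht.1
      have hq : ∀ q : QT T, ((q.1:ℝ)) < t → ((f q : ℝ) : WithBot ℝ) ≤ u := by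
        intro q hqt
        set s := (((q.1:ℝ)) + t)/2 with hsdef
        have hqs : (q.1:ℝ) < s := by rw [hsdef]; linarith
        have hst : s < t := by rw [hsdef]; linarith
        have hs0 : 0 < s := by rw [hsdef]; linarith [q.2.1]
        have hsT : s < T := lt_trans hst ht.2
        have h1 : ((f q : ℝ) : WithBot ℝ) ≤ PhiFun T f s := by
          simp only [PhiFun]
          rw [dif_pos ⟨hs0, hsT⟩]
          exact WithBot.coe_le_coe.2 (le_csSup (bddAbove_img hT hf hsT) ⟨q, hqs, rfl⟩)
        exact h1.trans (hu ⟨s, ⟨hs0.le, hst⟩, rfl⟩)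
      cases u with
      | bot => exact absurd (hq q₀ hq₀) (by simp)
      | coe y =>
        simp only [PhiFun]
        rw [dif_pos ⟨ht.1, ht.2⟩]
        refine WithBot.coe_le_coe.2 (csSup_le ((setQ_nonempty hT ht.1).image f) ?_)
        rintro x ⟨q, hqt, rfl⟩
        exact WithBot.coe_le_coe.1 (hq q hqt)

/-- The parametrization map from the compact box into `𝕍⁺`. -/
noncomputable def Phi (hT : 0 < T) (A B : QT T → ℝ) : ↥(Cset T A B) → VPlus T :=
  fun x => ⟨PhiFun T x.1, inVPlus_phiFun hT x.2.1⟩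

lemma isCompact_Cset (A B : QT T → ℝ) : IsCompact (Cset T A B) := by
  have hsub : Cset T A B ⊆ Set.pi Set.univ (fun q => Set.Icc (A q) (B q)) :=
    fun f hf q _ => hf.2 q
  have hclosed : IsClosed (Cset T A B) := by
    have h1 : IsClosed {f : QT T → ℝ | MonoQ T f} := by
      have : {f : QT T → ℝ | MonoQ T f}
          = ⋂ (p : QT T), ⋂ (q : QT T), ⋂ (_ : p.1 ≤ q.1), {f | f p ≤ f q} := by
        ext f; simp [MonoQ]
      rw [this]
      exact isClosed_iInter fun p => isClosed_iInter fun q => isClosed_iInter fun _ =>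
        isClosed_le (continuous_apply p) (continuous_apply q)
    have h2 : IsClosed {f : QT T → ℝ | ∀ q, f q ∈ Set.Icc (A q) (B q)} := by
      have : {f : QT T → ℝ | ∀ q, f q ∈ Set.Icc (A q) (B q)}
          = ⋂ (q : QT T), (fun f : QT T → ℝ => f q) ⁻¹' (Set.Icc (A q) (B q)) := by
        ext f; simp
      rw [this]
      exact isClosed_iInter fun q => isClosed_Icc.preimage (continuous_apply q)
    exact h1.inter h2
  exact (isCompact_univ_pi fun q => isCompact_Icc).of_isClosed_subset hclosed hsub

lemma VPlus.ext' {v w : VPlus T} (h : v.toFun = w.toFun) : v = w := by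
  cases v; cases w; cases h; rfl

lemma mem_range_phi (hT : 0 < T) {A B : QT T → ℝ} {v : VPlus T}
    (hA : ∀ q : QT T, ((A q : ℝ) : WithBot ℝ) ≤ v.toFun ((q.1 : ℝ)))
    (hB : ∀ q : QT T, v.toFun ((q.1 : ℝ)) ≤ ((B q : ℝ) : WithBot ℝ)) :
    v ∈ Set.range (Phi hT A B) := by
  classical
  have hreal : ∀ q : QT T, ∃ x : ℝ, v.toFun ((q.1:ℝ)) = ↑x := by
    intro q
    obtain ⟨x, hx⟩ := WithBot.ne_bot_iff_exists.1 (v.mem.2.2.1 _ ⟨q.2.1, q.2.2⟩)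
    exact ⟨x, hx.symm⟩
  choose g hg using hreal
  have hgC : g ∈ Cset T A B := by
    constructor
    · intro p q hpq
      have := v.mem.2.1 ((p.1:ℝ)) ((q.1:ℝ)) p.2.1.le (by exact_mod_cast hpq) q.2.2
      rw [hg p, hg q] at this
      exact_mod_cast this
    · intro q
      constructor
      · have := hA q; rw [hg q] at this; exact_mod_cast this
      · have := hB q; rw [hg q] at this; exact_mod_cast this
  refine ⟨⟨g, hgC⟩, VPlus.ext' ?_⟩
  funext t
  show PhiFun T g t = v.toFun t
  by_cases ht : 0 < t ∧ t < T
  · simp only [PhiFun]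
    rw [dif_pos ht]
    obtain ⟨x, hx⟩ := WithBot.ne_bot_iff_exists.1 (v.mem.2.2.1 t ⟨ht.1, ht.2⟩)
    rw [← hx]
    have hub : ∀ q : QT T, ((q.1:ℝ)) < t → g q ≤ x := by
      intro q hqt
      have := v.mem.2.1 ((q.1:ℝ)) t q.2.1.le hqt.le ht.2
      rw [hg q, ← hx] at this
      exact_mod_cast this
    have hbdd : BddAbove (g '' {q : QT T | ((q.1:ℝ)) < t}) :=
      ⟨x, by rintro y ⟨q, hq, rfl⟩; exact hub q hq⟩
    have h1 : sSup (g '' {q : QT T | ((q.1:ℝ)) < t}) ≤ x :=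
      csSup_le ((setQ_nonempty hT ht.1).image g) (by rintro y ⟨q, hq, rfl⟩; exact hub q hq)
    have h2 : x ≤ sSup (g '' {q : QT T | ((q.1:ℝ)) < t}) := by
      have hlub := v.mem.2.2.2 t ⟨ht.1, ht.2⟩
      have hup : ((sSup (g '' {q : QT T | ((q.1:ℝ)) < t}) : ℝ) : WithBot ℝ)
          ∈ upperBounds (v.toFun '' Set.Ico 0 t) := by
        rintro y ⟨s, hs, rfl⟩
        by_cases hs0 : 0 < s
        · obtain ⟨q, hq1, hq2⟩ := exists_rat_btwn hs.2
          have hq0 : 0 < ((q:ℝ)) := lt_trans hs0 hq1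
          have hqT : ((q:ℝ)) < T := lt_trans hq2 ht.2
          have hmono : v.toFun s ≤ v.toFun ((q:ℝ)) := v.mem.2.1 s _ hs.1 hq1.le hqT
          rw [hg ⟨q, hq0, hqT⟩] at hmono
          exact hmono.trans (WithBot.coe_le_coe.2 (le_csSup hbdd ⟨⟨q, hq0, hqT⟩, hq2, rfl⟩))
        · rw [v.mem.1 s (by simp [Set.mem_Ioo]; intro h; exact absurd h hs0)]
          exact bot_le
      have := hlub.2 hup
      rw [← hx] at this
      exact_mod_cast this
    rw [le_antisymm h1 h2]
  · simp only [PhiFun]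
    rw [dif_neg ht, v.mem.1 t (by simpa [Set.mem_Ioo] using ht)]

end Aux3
section Aux3b

variable {T : ℝ}

/-- Grid points for the continuity estimate. -/
noncomputable def gridq (hT : 0 < T) (r : ℚ) (i : ℕ) : QT T :=
  if h : 0 < ((((i:ℚ) * r : ℚ)) : ℝ) ∧ ((((i:ℚ) * r : ℚ)) : ℝ) < T
  then ⟨(i:ℚ) * r, h⟩ else Classical.choice (nonempty_QT hT)

lemma phi_adm_key (hT : 0 < T) {f g : QT T → ℝ} (hf : MonoQ T f) (hg : MonoQ T g)
    {δ η : ℝ} (hη : 0 < η) {r : ℚ} (hr : 0 < r) (hrδ : (r:ℝ) ≤ δ)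
    (hclose : ∀ i : ℕ, i ≤ ⌈T / (r:ℝ)⌉₊ → g (gridq hT r i) ≤ f (gridq hT r i) + η) :
    ∀ t ∈ Set.Ioo 0 T,
      (PhiFun T g (max (t - (δ + η)) 0)).map (fun x => x - (δ + η)) ≤ PhiFun T f t := by
  intro t ht
  have hδ : 0 < δ := lt_of_lt_of_le (by exact_mod_cast hr) hrδ
  by_cases hs : 0 < t - (δ + η)
  · have hmax : max (t - (δ + η)) 0 = t - (δ + η) := max_eq_left hs.le
    rw [hmax]
    simp only [PhiFun]
    rw [dif_pos ⟨hs, by linarith [ht.2]⟩, dif_pos ⟨ht.1, ht.2⟩, WithBot.map_coe,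
      WithBot.coe_le_coe, sub_le_iff_le_add]
    apply csSup_le ((setQ_nonempty hT hs).image g)
    rintro y ⟨q, hq, rfl⟩
    simp only [Set.mem_setOf_eq] at hq
    set i := ⌈((q.1:ℝ)) / (r:ℝ)⌉₊ with hidef
    have hrpos : (0:ℝ) < (r:ℝ) := by exact_mod_cast hr
    have hq0 : (0:ℝ) < (q.1:ℝ) := q.2.1
    have hdivpos : 0 < ((q.1:ℝ))/(r:ℝ) := div_pos hq0 hrpos
    have hile : ((q.1:ℝ)) ≤ (i:ℝ) * (r:ℝ) := by
      have h1 := Nat.le_ceil (((q.1:ℝ))/(r:ℝ))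
      rw [← hidef, div_le_iff₀ hrpos] at h1
      exact h1
    have hilt : (i:ℝ) * (r:ℝ) < (q.1:ℝ) + (r:ℝ) := by
      have h1 := Nat.ceil_lt_add_one hdivpos.le
      rw [← hidef] at h1
      have h2 := mul_lt_mul_of_pos_right h1 hrpos
      rw [add_mul, one_mul, div_mul_cancel₀ _ (ne_of_gt hrpos)] at h2
      exact h2
    have hγt : (i:ℝ)*(r:ℝ) < t := by linarith
    have hγ0 : (0:ℝ) < (i:ℝ)*(r:ℝ) := lt_of_lt_of_le hq0 hile
    have hγT : (i:ℝ)*(r:ℝ) < T := lt_trans hγt ht.2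
    have hvalid : 0 < ((((i:ℚ) * r : ℚ)) : ℝ) ∧ ((((i:ℚ) * r : ℚ)) : ℝ) < T := by
      push_cast; exact ⟨hγ0, hγT⟩
    have hgrid : gridq hT r i = ⟨(i:ℚ)*r, hvalid⟩ := by
      simp only [gridq]; exact dif_pos hvalid
    have hiN : i ≤ ⌈T/(r:ℝ)⌉₊ := by
      rw [hidef]
      exact Nat.ceil_le_ceil ((div_le_div_iff_of_pos_right hrpos).2 q.2.2.le)
    have hcl := hclose i hiN
    rw [hgrid] at hcl
    have hm1 : g q ≤ g ⟨(i:ℚ)*r, hvalid⟩ := hg _ _ (by exact_mod_cast hile)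
    have hm2 : f ⟨(i:ℚ)*r, hvalid⟩ ≤ sSup (f '' {q : QT T | ((q.1:ℝ)) < t}) :=
      le_csSup (bddAbove_img hT hf ht.2)
        ⟨⟨(i:ℚ)*r, hvalid⟩, by show ((((i:ℚ)*r : ℚ)) : ℝ) < t; push_cast; exact hγt, rfl⟩
    calc g q ≤ g ⟨(i:ℚ)*r, hvalid⟩ := hm1
      _ ≤ f ⟨(i:ℚ)*r, hvalid⟩ + η := hcl
      _ ≤ sSup (f '' {q : QT T | ((q.1:ℝ)) < t}) + (δ + η) := by linarith
  · push_neg at hs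
    have hmax : max (t - (δ + η)) 0 = 0 := max_eq_right hs
    rw [hmax]
    simp only [PhiFun]
    rw [dif_neg (by intro h; exact absurd h.1 (lt_irrefl 0))]
    rw [WithBot.map_bot]
    exact bot_le

lemma adm_phiFun (hT : 0 < T) {f g : QT T → ℝ} (hf : MonoQ T f) (hg : MonoQ T g)
    {δ η : ℝ} (hη : 0 < η) {r : ℚ} (hr : 0 < r) (hrδ : (r:ℝ) ≤ δ)
    (hclose : ∀ i : ℕ, i ≤ ⌈T / (r:ℝ)⌉₊ →
      |f (gridq hT r i) - g (gridq hT r i)| ≤ η) :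
    Adm T (PhiFun T f) (PhiFun T g) (δ + η) := by
  have hδ : 0 < δ := lt_of_lt_of_le (by exact_mod_cast hr) hrδ
  refine ⟨by linarith, fun t ht => ?_⟩
  constructor
  · exact phi_adm_key hT hg hf hη hr hrδ
      (fun i hi => by have := abs_le.1 (hclose i hi); linarith [this.2]) t ht
  · exact phi_adm_key hT hf hg hη hr hrδ
      (fun i hi => by have := abs_le.1 (hclose i hi); linarith [this.1]) t ht

lemma continuous_phi (hT : 0 < T) (A B : QT T → ℝ) : Continuous (Phi hT A B) := by
  have key : ∀ U ∈ {U : Set (VPlus T) | ∃ v : VPlus T, ∃ ε : ℝ, 0 < ε ∧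
      U = {w : VPlus T | dL T v.toFun w.toFun < ε}}, IsOpen ((Phi hT A B) ⁻¹' U) := by
    rintro U ⟨v₀, ε₀, hε₀, rfl⟩
    rw [isOpen_iff_forall_mem_open]
    intro x₀ hx₀
    simp only [Set.mem_preimage, Set.mem_setOf_eq] at hx₀
    obtain ⟨ε', hadm, hε'⟩ := exists_adm_lt hT v₀.mem (Phi hT A B x₀).mem hx₀
    set ρ := ε₀ - ε' with hρdef
    have hρ : 0 < ρ := by simp only [hρdef]; linarith
    obtain ⟨r, hr0, hrδ⟩ := exists_rat_btwn (show (0:ℝ) < ρ/3 by linarith)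
    have hr0' : 0 < r := by exact_mod_cast hr0
    set N := ⌈T / (r:ℝ)⌉₊ with hNdef
    refine ⟨⋂ i ∈ Finset.range (N+1),
      {x : ↥(Cset T A B) | |x.1 (gridq hT r i) - x₀.1 (gridq hT r i)| < ρ/3}, ?_, ?_, ?_⟩
    · intro x hx
      simp only [Set.mem_iInter, Set.mem_setOf_eq] at hx
      have hclose : ∀ i : ℕ, i ≤ N → |x.1 (gridq hT r i) - x₀.1 (gridq hT r i)| ≤ ρ/3 :=
        fun i hi => (hx i (Finset.mem_range.2 (Nat.lt_succ_of_le hi))).le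
      have hadm2 : Adm T (PhiFun T x₀.1) (PhiFun T x.1) (ρ/3 + ρ/3) :=
        adm_phiFun hT x₀.2.1 x.2.1 (by linarith) hr0' hrδ.le
          (fun i hi => by rw [abs_sub_comm]; exact hclose i hi)
      have hadm3 : Adm T v₀.toFun (Phi hT A B x).toFun (ε' + (ρ/3 + ρ/3)) :=
        Adm.comp v₀.mem (Phi hT A B x).mem hadm hadm2
      simp only [Set.mem_preimage, Set.mem_setOf_eq]
      calc dL T v₀.toFun (Phi hT A B x).toFun ≤ ε' + (ρ/3 + ρ/3) := dL_le_of_adm hadm3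
        _ < ε₀ := by simp only [hρdef]; linarith
    · apply isOpen_biInter_finset
      intro i _
      have heq : {x : ↥(Cset T A B) | |x.1 (gridq hT r i) - x₀.1 (gridq hT r i)| < ρ/3}
          = (fun x : ↥(Cset T A B) => x.1 (gridq hT r i)) ⁻¹'
            (Metric.ball (x₀.1 (gridq hT r i)) (ρ/3)) := by
        ext x; simp [Metric.mem_ball, Real.dist_eq]
      rw [heq]
      have hc : Continuous (fun x : ↥(Cset T A B) => x.1 (gridq hT r i)) :=
        (continuous_apply (gridq hT r i)).comp continuous_subtype_val
      exact Metric.isOpen_ball.preimage hc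
    · simp only [Set.mem_iInter, Set.mem_setOf_eq]
      intro i _
      simpa using (by linarith : (0:ℝ) < ρ/3)

  exact continuous_generateFrom_iff.mpr key
lemma isCompact_range_phi (hT : 0 < T) (A B : QT T → ℝ) :
    IsCompact (Set.range (Phi hT A B)) := by
  have : CompactSpace ↥(Cset T A B) := isCompact_iff_compactSpace.1 (isCompact_Cset A B)
  exact isCompact_range (continuous_phi hT A B)

end Aux3b
section Aux4

open scoped ENNReal

variable {T : ℝ}

lemma exists_eval_upper (hT : 0 < T) {Ω : Type*} [MeasurableSpace Ω] (P : Measure Ω)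
    [IsProbabilityMeasure P] {Lp : Ω → VPlus T} (hLp : Measurable Lp)
    {t : ℝ} (ht : t ∈ Set.Ioo 0 T) {θ : ℝ≥0∞} (hθ : 0 < θ) :
    ∃ c : ℝ, P (Lp ⁻¹' {v : VPlus T | ((c : ℝ) : WithBot ℝ) < v.toFun t}) ≤ θ := by
  set s : ℕ → Set Ω :=
    fun n => Lp ⁻¹' {v : VPlus T | (((n : ℝ)) : WithBot ℝ) < v.toFun t} with hsdef
  have hmeas : ∀ n, MeasurableSet (s n) :=
    fun n => hLp (isOpen_eval_gt hT ht _).measurableSet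
  have hanti : Antitone s := by
    intro n m hnm ω hω
    simp only [hsdef, Set.mem_preimage, Set.mem_setOf_eq] at hω ⊢
    refine lt_of_le_of_lt ?_ hω
    exact WithBot.coe_le_coe.2 (by exact_mod_cast hnm)
  have hempty : ⋂ n, s n = ∅ := by
    ext ω
    simp only [Set.mem_iInter, Set.mem_empty_iff_false, iff_false, not_forall]
    obtain ⟨x, hx⟩ := WithBot.ne_bot_iff_exists.1 ((Lp ω).mem.2.2.1 t ht)
    obtain ⟨n, hn⟩ := exists_nat_ge x
    refine ⟨n, ?_⟩
    simp only [hsdef, Set.mem_preimage, Set.mem_setOf_eq, not_lt, ← hx]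
    exact WithBot.coe_le_coe.2 hn
  have htend := tendsto_measure_iInter_atTop (fun n => (hmeas n).nullMeasurableSet) hanti
    ⟨0, measure_ne_top P _⟩
  rw [hempty, measure_empty] at htend
  obtain ⟨n, hn⟩ := (htend.eventually_lt_const hθ).exists
  exact ⟨n, by simpa [hsdef] using hn.le⟩

lemma exists_eval_lower (hT : 0 < T) {Ω : Type*} [MeasurableSpace Ω] (P : Measure Ω)
    [IsProbabilityMeasure P] {Lm : Ω → VPlus T} (hLm : Measurable Lm)
    {t : ℝ} (ht : t ∈ Set.Ioo 0 T) {θ : ℝ≥0∞} (hθ : 0 < θ) :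
    ∃ d : ℝ, P (Lm ⁻¹' {v : VPlus T | v.toFun t < ((d : ℝ) : WithBot ℝ)}) ≤ θ := by
  set s : ℕ → Set Ω :=
    fun n => Lm ⁻¹' {v : VPlus T | v.toFun t < ((-(n : ℝ) : ℝ) : WithBot ℝ)} with hsdef
  have hmeas : ∀ n, MeasurableSet (s n) :=
    fun n => hLm (measurableSet_eval_lt hT ht _)
  have hanti : Antitone s := by
    intro n m hnm ω hω
    simp only [hsdef, Set.mem_preimage, Set.mem_setOf_eq] at hω ⊢
    refine lt_of_lt_of_le hω ?_
    exact WithBot.coe_le_coe.2 (by exact_mod_cast neg_le_neg (show (n:ℝ) ≤ m by exact_mod_cast hnm))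
  have hempty : ⋂ n, s n = ∅ := by
    ext ω
    simp only [Set.mem_iInter, Set.mem_empty_iff_false, iff_false, not_forall]
    obtain ⟨x, hx⟩ := WithBot.ne_bot_iff_exists.1 ((Lm ω).mem.2.2.1 t ht)
    obtain ⟨n, hn⟩ := exists_nat_ge (-x)
    refine ⟨n, ?_⟩
    simp only [hsdef, Set.mem_preimage, Set.mem_setOf_eq, not_lt, ← hx]
    exact WithBot.coe_le_coe.2 (by linarith)
  have htend := tendsto_measure_iInter_atTop (fun n => (hmeas n).nullMeasurableSet) hanti
    ⟨0, measure_ne_top P _⟩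
  rw [hempty, measure_empty] at htend
  obtain ⟨n, hn⟩ := (htend.eventually_lt_const hθ).exists
  exact ⟨-(n:ℝ), by simpa [hsdef] using hn.le⟩

lemma tsum_half_pow : ∑' n : ℕ, ((2:ℝ≥0∞)⁻¹) ^ (n + 2) = 2⁻¹ := by
  have h : ∀ n : ℕ, ((2:ℝ≥0∞)⁻¹) ^ (n + 2) = 2⁻¹ ^ n * 2⁻¹ ^ 2 := fun n => pow_add _ n 2
  rw [tsum_congr h, ENNReal.tsum_mul_right, ENNReal.tsum_geometric, ENNReal.one_sub_inv_two,
    inv_inv, sq, ← mul_assoc, ENNReal.mul_inv_cancel two_ne_zero ENNReal.ofNat_ne_top,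
    one_mul]

end Aux4
/-- **Tightness of the clamped laws (Proposition 4.1).**
If `L⁻ ≤ L⁺` a.s. are `𝕍⁺`-valued random elements, then the family of laws
`{ℙ ∘ (L⁻ ∨ L ∧ L⁺)⁻¹ : L : Ω → 𝕍⁺ Borel measurable}` is tight: for every `ε > 0`
there is a compact `K ⊆ 𝕍⁺` with `μ(K) ≥ 1 − ε` for every member `μ` of the family.
(The clamp `M = L⁻ ∨ L ∧ L⁺` is characterized pointwise:
`M(ω)(t) = L⁻(ω)(t) ⊔ (L(ω)(t) ⊓ L⁺(ω)(t))`.) -/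
theorem clamped_laws_tight (T : ℝ) (hT : 0 < T)
    {Ω : Type*} [MeasurableSpace Ω] (P : Measure Ω) [IsProbabilityMeasure P]
    (Lm Lp : Ω → VPlus T) (hLm : Measurable Lm) (hLp : Measurable Lp)
    (hle : ∀ᵐ ω ∂P, ∀ t : ℝ, 0 ≤ t → t < T → (Lm ω).toFun t ≤ (Lp ω).toFun t) :
    ∀ ε : ℝ, 0 < ε → ∃ K : Set (VPlus T), IsCompact K ∧
      ∀ L M : Ω → VPlus T, Measurable L → Measurable M →
        (∀ ω t, (M ω).toFun t = (Lm ω).toFun t ⊔ ((L ω).toFun t ⊓ (Lp ω).toFun t)) →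
        ENNReal.ofReal (1 - ε) ≤ P.map M K := by
  intro ε hε
  -- grid times accumulating at 0 and at T
  set a : ℕ → ℝ := fun n => T / ((n:ℝ) + 2) with hadef
  set b : ℕ → ℝ := fun n => T - T / ((n:ℝ) + 2) with hbdef
  have hn2 : ∀ n : ℕ, (1:ℝ) < (n:ℝ) + 2 := fun n => by
    have : (0:ℝ) ≤ (n:ℝ) := Nat.cast_nonneg n
    linarith
  have ha : ∀ n, a n ∈ Set.Ioo 0 T := fun n =>
    ⟨by simp only [hadef]; positivity, by simp only [hadef]; exact div_lt_self hT (hn2 n)⟩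
  have hb : ∀ n, b n ∈ Set.Ioo 0 T := fun n =>
    ⟨by simp only [hbdef]; linarith [div_lt_self hT (hn2 n)],
     by simp only [hbdef];
        have : 0 < T / ((n:ℝ) + 2) := by positivity
        linarith⟩
  have hθpos : ∀ n : ℕ, (0:ENNReal) < ENNReal.ofReal ε * 2⁻¹ ^ (n + 2) := by
    intro n
    exact ENNReal.mul_pos (ENNReal.ofReal_pos.2 hε).ne'
      (pow_ne_zero _ (ENNReal.inv_ne_zero.2 ENNReal.ofNat_ne_top))
  choose c hc using fun n => exists_eval_upper hT P hLp (hb n) (hθpos n)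
  choose d hd using fun n => exists_eval_lower hT P hLm (ha n) (hθpos n)
  set A : QT T → ℝ := fun q => d ⌈T / ((q.1:ℝ))⌉₊ with hAdef
  set B : QT T → ℝ := fun q => c ⌈T / (T - (q.1:ℝ))⌉₊ with hBdef
  refine ⟨Set.range (Phi hT A B), isCompact_range_phi hT A B, ?_⟩
  intro L M hL hM hchar
  set Bad : ℕ → Set Ω := fun n =>
    Lp ⁻¹' {v : VPlus T | ((c n : ℝ) : WithBot ℝ) < v.toFun (b n)} ∪
    Lm ⁻¹' {v : VPlus T | v.toFun (a n) < ((d n : ℝ) : WithBot ℝ)} with hBaddef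
  have hBadmeas : ∀ n, MeasurableSet (Bad n) := fun n =>
    (hLp (isOpen_eval_gt hT (hb n) (c n)).measurableSet).union
      (hLm (measurableSet_eval_lt hT (ha n) (d n)))
  have hBadBound : P (⋃ n, Bad n) ≤ ENNReal.ofReal ε := by
    calc P (⋃ n, Bad n) ≤ ∑' n, P (Bad n) := measure_iUnion_le _
      _ ≤ ∑' n : ℕ, (ENNReal.ofReal ε * (2⁻¹ ^ (n+2) + 2⁻¹ ^ (n+2))) := by
          apply ENNReal.tsum_le_tsum
          intro n
          rw [mul_add]
          exact le_trans (measure_union_le _ _) (add_le_add (hc n) (hd n))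
      _ = ENNReal.ofReal ε * ((∑' n : ℕ, (2:ENNReal)⁻¹ ^ (n+2)) + ∑' n : ℕ, (2:ENNReal)⁻¹ ^ (n+2)) := by
          rw [ENNReal.tsum_mul_left, ENNReal.tsum_add]
      _ = ENNReal.ofReal ε := by
          rw [tsum_half_pow, ENNReal.inv_two_add_inv_two, mul_one]
  set E := (⋃ n, Bad n)ᶜ with hEdef
  have hPE : ENNReal.ofReal (1 - ε) ≤ P E := by
    calc ENNReal.ofReal (1 - ε) = 1 - ENNReal.ofReal ε := by
          rw [ENNReal.ofReal_sub 1 hε.le, ENNReal.ofReal_one]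
      _ ≤ 1 - P (⋃ n, Bad n) := tsub_le_tsub_left hBadBound 1
      _ = P E := (prob_compl_eq_one_sub (MeasurableSet.iUnion hBadmeas)).symm
  have hsub : ∀ ω, ω ∈ E →
      (∀ t : ℝ, 0 ≤ t → t < T → (Lm ω).toFun t ≤ (Lp ω).toFun t) →
      M ω ∈ Set.range (Phi hT A B) := by
    intro ω hω hsand
    simp only [hEdef, Set.mem_compl_iff, Set.mem_iUnion, not_exists] at hω
    have hω' : ∀ n, ω ∉ Bad n := hω
    apply mem_range_phi hT
    · intro q
      set n := ⌈T / ((q.1:ℝ))⌉₊ with hndef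
      have h2 : ¬ ((Lm ω).toFun (a n) < ((d n : ℝ) : WithBot ℝ)) := by
        intro h
        exact hω' n (Or.inr h)
      have h2' : ((d n : ℝ) : WithBot ℝ) ≤ (Lm ω).toFun (a n) := not_lt.1 h2
      have hq0 : (0:ℝ) < (q.1:ℝ) := q.2.1
      have haq : a n ≤ (q.1:ℝ) := by
        have h1 : T / (q.1:ℝ) ≤ ((n:ℝ) + 2) := by
          refine le_trans (Nat.le_ceil _) ?_
          rw [hndef]
          push_cast
          linarith
        rw [div_le_iff₀ hq0] at h1
        simp only [hadef]
        rw [div_le_iff₀ (by positivity : (0:ℝ) < (n:ℝ) + 2)]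
        nlinarith
      have hmono : (Lm ω).toFun (a n) ≤ (Lm ω).toFun ((q.1:ℝ)) :=
        (Lm ω).mem.2.1 _ _ (ha n).1.le haq q.2.2
      have hMge : (Lm ω).toFun ((q.1:ℝ)) ≤ (M ω).toFun ((q.1:ℝ)) := by
        rw [hchar ω]
        exact le_sup_left
      exact le_trans h2' (le_trans hmono hMge)
    · intro q
      set n := ⌈T / (T - (q.1:ℝ))⌉₊ with hndef
      have h1' : ¬ (((c n : ℝ) : WithBot ℝ) < (Lp ω).toFun (b n)) := by
        intro h
        exact hω' n (Or.inl h)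
      have h1 : (Lp ω).toFun (b n) ≤ ((c n : ℝ) : WithBot ℝ) := not_lt.1 h1'
      have hTq : (0:ℝ) < T - (q.1:ℝ) := by linarith [q.2.2]
      have hqb : (q.1:ℝ) ≤ b n := by
        have h2 : T / (T - (q.1:ℝ)) ≤ ((n:ℝ) + 2) := by
          refine le_trans (Nat.le_ceil _) ?_
          rw [hndef]
          push_cast
          linarith
        rw [div_le_iff₀ hTq] at h2
        have h3 : T / ((n:ℝ) + 2) ≤ T - (q.1:ℝ) := by
          rw [div_le_iff₀ (by positivity : (0:ℝ) < (n:ℝ) + 2)]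
          nlinarith
        simp only [hbdef]
        linarith
      have hMle : (M ω).toFun ((q.1:ℝ)) ≤ (Lp ω).toFun ((q.1:ℝ)) := by
        rw [hchar ω]
        exact sup_le (hsand _ q.2.1.le q.2.2) inf_le_right
      have hmono : (Lp ω).toFun ((q.1:ℝ)) ≤ (Lp ω).toFun (b n) :=
        (Lp ω).mem.2.1 _ _ q.2.1.le hqb (hb n).2
      exact le_trans hMle (le_trans hmono h1)
  calc ENNReal.ofReal (1 - ε) ≤ P E := hPE
    _ ≤ P (M ⁻¹' Set.range (Phi hT A B)) :=
        measure_mono_ae (hle.mono fun ω hsand hωE => hsub ω hωE hsand)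
    _ ≤ P.map M (Set.range (Phi hT A B)) := Measure.le_map_apply hM.aemeasurable _

end
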